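/- arXiv:2505.24548 — 2 statements merged into one kernel-verified Lean document; each statement's English description precedes it below -/
import Mathlib

section
/- Let a, a_n : [0,1] × ℝ^d → ℝ^{d×d} be bounded, satisfy |a(t,x) − a(s,y)| ≤ A(|x−y|^γ + |t−s|^α), |a_n(t,x) − a_n(s,y)| ≤ A(|x−y|^γ + |t−s|^α), and sup |a − a_n| ≤ Δ_a. Let θ_{u,t_j}(y) and θ^n_{t_k,t_j}(y) be continuous and discrete backward flows satisfying |θ_{u,t_j}(y) − θ^n_{t_k,t_j}(y)| ≤ C_0(|u − t_k| + (Δ_b + n^{−β}))·(1+|y|) for u ∈ [t_k, t_{k+1}]. Then there exists C > 0 such that |∫_{t_i}^{t_j} a(u, θ_{u,t_j}(y)) du − (1/n)Σ_{k=i}^{j−1} a_n(t_k, θ^n_{t_k,t_j}(y))| ≤ C·(t_j − t_i)·(n^{−min(γ,α,β·γ)} + Δ_a + Δ_b^γ + Δ_b)·(1 + |y|). -/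
open Real MeasureTheory intervalIntegral

/-- Frobenius norm of a `d × d` real matrix. -/
noncomputable def frobNorm (d : ℕ) (M : Matrix (Fin d) (Fin d) ℝ) : ℝ :=
  Real.sqrt (∑ p : Fin d, ∑ q : Fin d, (M p q) ^ 2)

lemma abs_entry_le_frobNorm {d : ℕ} (M : Matrix (Fin d) (Fin d) ℝ) (p q : Fin d) :
    |M p q| ≤ frobNorm d M := by
  rw [frobNorm, ← Real.sqrt_sq_eq_abs]
  refine Real.sqrt_le_sqrt ?_
  calc (M p q) ^ 2 ≤ ∑ q' : Fin d, (M p q') ^ 2 :=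
        Finset.single_le_sum (f := fun q' => (M p q') ^ 2)
          (fun i _ => sq_nonneg _) (Finset.mem_univ q)
    _ ≤ ∑ p' : Fin d, ∑ q' : Fin d, (M p' q') ^ 2 :=
        Finset.single_le_sum (f := fun p' => ∑ q' : Fin d, (M p' q') ^ 2)
          (fun i _ => Finset.sum_nonneg fun _ _ => sq_nonneg _) (Finset.mem_univ p)

lemma frobNorm_le_of_entries {d : ℕ} (M : Matrix (Fin d) (Fin d) ℝ) {B : ℝ} (hB : 0 ≤ B)
    (h : ∀ p q, |M p q| ≤ B) : frobNorm d M ≤ d * B := by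
  rw [frobNorm]
  have h1 : ∑ p : Fin d, ∑ q : Fin d, (M p q) ^ 2 ≤ ((d : ℝ) * B) ^ 2 := by
    calc ∑ p : Fin d, ∑ q : Fin d, (M p q) ^ 2
        ≤ ∑ _p : Fin d, ∑ _q : Fin d, B ^ 2 :=
          Finset.sum_le_sum fun p _ => Finset.sum_le_sum fun q _ => by
            rw [← sq_abs]; exact pow_le_pow_left₀ (abs_nonneg _) (h p q) 2
      _ = ((d : ℝ) * B) ^ 2 := by
          simp [Finset.sum_const, Finset.card_univ, nsmul_eq_mul]; ring
  calc Real.sqrt (∑ p : Fin d, ∑ q : Fin d, (M p q) ^ 2)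
      ≤ Real.sqrt (((d : ℝ) * B) ^ 2) := Real.sqrt_le_sqrt h1
    _ = (d : ℝ) * B := Real.sqrt_sq (by positivity)

lemma real_rpow_add_le {x y p : ℝ} (hx : 0 ≤ x) (hy : 0 ≤ y) (hp : 0 ≤ p) (hp1 : p ≤ 1) :
    (x + y) ^ p ≤ x ^ p + y ^ p := by
  lift x to NNReal using hx
  lift y to NNReal using hy
  exact_mod_cast NNReal.rpow_add_le_add_rpow x y hp hp1

lemma cont_entry {d : ℕ} {A γ α : ℝ} (hγ0 : 0 < γ) (hα0 : 0 < α)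
    (a : ℝ → EuclideanSpace ℝ (Fin d) → Matrix (Fin d) (Fin d) ℝ)
    (ha : ∀ (t s : ℝ) (x y : EuclideanSpace ℝ (Fin d)),
      frobNorm d (a t x - a s y) ≤ A * (‖x - y‖ ^ γ + |t - s| ^ α))
    {θ : ℝ → EuclideanSpace ℝ (Fin d)} (hθ : Continuous θ) (p q : Fin d) :
    Continuous fun u => a u (θ u) p q := by
  rw [continuous_iff_continuousAt]
  intro u
  have key : ∀ v, |a v (θ v) p q - a u (θ u) p q| ≤ A * (‖θ v - θ u‖ ^ γ + |v - u| ^ α) := by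
    intro v
    have h := (abs_entry_le_frobNorm (a v (θ v) - a u (θ u)) p q).trans (ha v u (θ v) (θ u))
    simpa [Matrix.sub_apply] using h
  have hg : Filter.Tendsto (fun v => A * (‖θ v - θ u‖ ^ γ + |v - u| ^ α)) (nhds u) (nhds 0) := by
    have h1 : Filter.Tendsto (fun v => ‖θ v - θ u‖ ^ γ) (nhds u) (nhds 0) := by
      have hc : ContinuousAt (fun z : ℝ => z ^ γ) 0 :=
        Real.continuousAt_rpow_const 0 γ (Or.inr hγ0.le)
      have hb : Filter.Tendsto (fun v => ‖θ v - θ u‖) (nhds u) (nhds 0) := by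
        have : Continuous fun v => ‖θ v - θ u‖ := (hθ.sub continuous_const).norm
        simpa using this.tendsto u
      have := hc.tendsto.comp hb
      simpa [Real.zero_rpow (ne_of_gt hγ0), Function.comp_def] using this
    have h2 : Filter.Tendsto (fun v => |v - u| ^ α) (nhds u) (nhds 0) := by
      have hc : ContinuousAt (fun z : ℝ => z ^ α) 0 :=
        Real.continuousAt_rpow_const 0 α (Or.inr hα0.le)
      have hb : Filter.Tendsto (fun v : ℝ => |v - u|) (nhds u) (nhds 0) := by
        have : Continuous fun v : ℝ => |v - u| := (continuous_id.sub continuous_const).abs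
        simpa using this.tendsto u
      have := hc.tendsto.comp hb
      simpa [Real.zero_rpow (ne_of_gt hα0), Function.comp_def] using this
    have := ((h1.add h2).const_mul A)
    simpa using this
  have : Filter.Tendsto (fun v => a v (θ v) p q) (nhds u) (nhds (a u (θ u) p q)) := by
    rw [tendsto_iff_dist_tendsto_zero]
    refine squeeze_zero (fun v => dist_nonneg) (fun v => ?_) hg
    rw [Real.dist_eq]; exact key v
  exact this
set_option maxHeartbeats 1000000 in
/-- comparison of the covariance of the frozen continuous Gaussian
process with that of the frozen Markov chain. -/
theorem stmt_14 (d : ℕ) (A γ α β Λ : ℝ)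
    (hA : 0 ≤ A) (hγ0 : 0 < γ) (hγ1 : γ ≤ 1) (hα0 : 0 < α) (hα1 : α ≤ 1)
    (hβ0 : 0 < β) (hβ1 : β ≤ 1) (hΛ : 0 < Λ) (C0 : ℝ) (hC0 : 0 ≤ C0) :
    ∃ C > 0,
      ∀ (a an : ℝ → EuclideanSpace ℝ (Fin d) → Matrix (Fin d) (Fin d) ℝ),
        (∀ t x, frobNorm d (a t x) ≤ Λ) →
        (∀ t x, frobNorm d (an t x) ≤ Λ) →
        (∀ (t s : ℝ) (x y : EuclideanSpace ℝ (Fin d)),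
          frobNorm d (a t x - a s y) ≤ A * (‖x - y‖ ^ γ + |t - s| ^ α)) →
        (∀ (t s : ℝ) (x y : EuclideanSpace ℝ (Fin d)),
          frobNorm d (an t x - an s y) ≤ A * (‖x - y‖ ^ γ + |t - s| ^ α)) →
        ∀ (Δa Δb : ℝ), 0 ≤ Δa → 0 ≤ Δb →
        (∀ t x, frobNorm d (a t x - an t x) ≤ Δa) →
        ∀ (n i j : ℕ), 0 < n → i ≤ j → j ≤ n →
        ∀ (y : EuclideanSpace ℝ (Fin d))
          (θ : ℝ → EuclideanSpace ℝ (Fin d)) (θn : ℕ → EuclideanSpace ℝ (Fin d)),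
          (Continuous θ) →
          (∀ k ∈ Finset.Ico i j, ∀ u ∈ Set.Icc ((k : ℝ) / n) (((k : ℝ) + 1) / n),
            ‖θ u - θn k‖ ≤ C0 * (|u - (k : ℝ) / n| + (Δb + (n : ℝ) ^ (-β))) * (1 + ‖y‖)) →
          frobNorm d
            ((Matrix.of fun p q =>
                ∫ u in ((i : ℝ) / n)..((j : ℝ) / n), a u (θ u) p q) -
              (1 / (n : ℝ)) • ∑ k ∈ Finset.Ico i j, an ((k : ℝ) / n) (θn k)) ≤
            C * ((j : ℝ) / n - (i : ℝ) / n) *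
              ((n : ℝ) ^ (-min γ (min α (β * γ))) + Δa + Δb ^ γ + Δb) * (1 + ‖y‖) := by
  classical
  set m : ℝ := min γ (min α (β * γ)) with hm
  set K : ℝ := 1 + 3 * A * (1 + C0 ^ γ) with hKdef
  have hP : 0 ≤ C0 ^ γ := Real.rpow_nonneg hC0 γ
  have hAP : 0 ≤ A * C0 ^ γ := mul_nonneg hA hP
  have hK0 : (1 : ℝ) ≤ K := by rw [hKdef]; nlinarith
  refine ⟨(d : ℝ) * K + 1, by positivity, ?_⟩
  intro a an hΛa hΛan ha han Δa Δb hΔa hΔb hdiff n i j hn hij hjn y θ θn hθ hflow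
  have hn0 : (0 : ℝ) < n := by exact_mod_cast hn
  have hn1 : (1 : ℝ) ≤ n := by exact_mod_cast hn
  set Y : ℝ := 1 + ‖y‖ with hYdef
  have hY : (1 : ℝ) ≤ Y := le_add_of_nonneg_right (norm_nonneg y)
  have hY0 : (0 : ℝ) ≤ Y := by linarith
  set N : ℝ := (n : ℝ) ^ (-m) with hNdef
  have hN0 : 0 ≤ N := Real.rpow_nonneg hn0.le _
  set T : ℝ := N + Δa + Δb ^ γ + Δb with hTdef
  have hΔbγ : 0 ≤ Δb ^ γ := Real.rpow_nonneg hΔb γ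
  have hT0 : 0 ≤ T := by rw [hTdef]; linarith
  have hTY : 0 ≤ T * Y := mul_nonneg hT0 hY0
  have hmγ : m ≤ γ := min_le_left _ _
  have hmα : m ≤ α := le_trans (min_le_right _ _) (min_le_left _ _)
  have hmβγ : m ≤ β * γ := le_trans (min_le_right _ _) (min_le_right _ _)
  -- pointwise key bound
  have key : ∀ k ∈ Finset.Ico i j, ∀ u ∈ Set.Icc ((k : ℝ) / n) (((k : ℝ) + 1) / n),
      ∀ p q : Fin d, |a u (θ u) p q - an ((k : ℝ) / n) (θn k) p q| ≤ K * (T * Y) := by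
    intro k hk u hu p q
    have hun : |u - (k : ℝ) / n| ≤ 1 / n := by
      have h1 := hu.1
      have h2 := hu.2
      have : ((k : ℝ) + 1) / n = (k : ℝ) / n + 1 / n := by ring
      rw [abs_le]
      constructor
      · have : (0 : ℝ) < 1 / n := by positivity
        linarith
      · linarith [this ▸ h2]
    have h1 : |a u (θ u) p q - an u (θ u) p q| ≤ Δa := by
      have h := (abs_entry_le_frobNorm (a u (θ u) - an u (θ u)) p q).trans (hdiff u (θ u))
      simpa [Matrix.sub_apply] using h
    have h2 : |an u (θ u) p q - an ((k : ℝ) / n) (θn k) p q| ≤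
        A * (‖θ u - θn k‖ ^ γ + |u - (k : ℝ) / n| ^ α) := by
      have h := (abs_entry_le_frobNorm (an u (θ u) - an ((k : ℝ) / n) (θn k)) p q).trans
        (han u ((k : ℝ) / n) (θ u) (θn k))
      simpa [Matrix.sub_apply] using h
    -- time regularity term
    have e2 : |u - (k : ℝ) / n| ^ α ≤ N := by
      calc |u - (k : ℝ) / n| ^ α ≤ ((1 : ℝ) / n) ^ α :=
            by exact Real.rpow_le_rpow (abs_nonneg _) hun hα0.le
        _ = (n : ℝ) ^ (-α) := by
            rw [one_div, Real.inv_rpow hn0.le, ← Real.rpow_neg hn0.le]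
        _ ≤ N := Real.rpow_le_rpow_of_exponent_le hn1 (by linarith)
    have e1 : ((1 : ℝ) / n) ^ γ ≤ N := by
      calc ((1 : ℝ) / n) ^ γ = (n : ℝ) ^ (-γ) := by
            rw [one_div, Real.inv_rpow hn0.le, ← Real.rpow_neg hn0.le]
        _ ≤ N := Real.rpow_le_rpow_of_exponent_le hn1 (by linarith)
    have e3 : ((n : ℝ) ^ (-β)) ^ γ ≤ N := by
      have : ((n : ℝ) ^ (-β)) ^ γ = (n : ℝ) ^ (-(β * γ)) := by
        rw [← Real.rpow_mul hn0.le, neg_mul]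
      rw [this]
      exact Real.rpow_le_rpow_of_exponent_le hn1 (by linarith)
    have hnβ : (0 : ℝ) ≤ (n : ℝ) ^ (-β) := Real.rpow_nonneg hn0.le _
    -- flow bound
    have hS : ‖θ u - θn k‖ ≤ C0 * (1 / n + (Δb + (n : ℝ) ^ (-β))) * Y := by
      refine (hflow k hk u hu).trans ?_
      gcongr
    have hpow : ‖θ u - θn k‖ ^ γ ≤ C0 ^ γ * (2 * N + Δb ^ γ) * Y := by
      have h3 : ‖θ u - θn k‖ ^ γ ≤ (C0 * (1 / n + (Δb + (n : ℝ) ^ (-β))) * Y) ^ γ :=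
        Real.rpow_le_rpow (norm_nonneg _) hS hγ0.le
      refine h3.trans ?_
      rw [Real.mul_rpow (by positivity) hY0, Real.mul_rpow hC0 (by positivity)]
      have hYγ : Y ^ γ ≤ Y := by
        calc Y ^ γ ≤ Y ^ (1 : ℝ) := by exact Real.rpow_le_rpow_of_exponent_le hY hγ1
          _ = Y := Real.rpow_one Y
      have hSγ : (1 / (n : ℝ) + (Δb + (n : ℝ) ^ (-β))) ^ γ ≤ 2 * N + Δb ^ γ := by
        calc (1 / (n : ℝ) + (Δb + (n : ℝ) ^ (-β))) ^ γ
            ≤ (1 / (n : ℝ)) ^ γ + (Δb + (n : ℝ) ^ (-β)) ^ γ :=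
              by exact real_rpow_add_le (by positivity) (by positivity) hγ0.le hγ1
          _ ≤ (1 / (n : ℝ)) ^ γ + (Δb ^ γ + ((n : ℝ) ^ (-β)) ^ γ) := by
              linarith [real_rpow_add_le hΔb hnβ hγ0.le hγ1]
          _ ≤ 2 * N + Δb ^ γ := by linarith
      have hyγ0 : (0 : ℝ) ≤ Y ^ γ := Real.rpow_nonneg hY0 γ
      have step1 : C0 ^ γ * (1 / (n : ℝ) + (Δb + (n : ℝ) ^ (-β))) ^ γ * Y ^ γ
          ≤ C0 ^ γ * (2 * N + Δb ^ γ) * Y ^ γ := by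
        apply mul_le_mul_of_nonneg_right _ hyγ0
        exact mul_le_mul_of_nonneg_left hSγ hP
      refine step1.trans ?_
      apply mul_le_mul_of_nonneg_left hYγ
      positivity
    -- assemble
    have tri : |a u (θ u) p q - an ((k : ℝ) / n) (θn k) p q| ≤
        Δa + A * (‖θ u - θn k‖ ^ γ + |u - (k : ℝ) / n| ^ α) := by
      calc |a u (θ u) p q - an ((k : ℝ) / n) (θn k) p q|
          ≤ |a u (θ u) p q - an u (θ u) p q| +
            |an u (θ u) p q - an ((k : ℝ) / n) (θn k) p q| := by exact abs_sub_le _ _ _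
        _ ≤ _ := by exact add_le_add h1 h2
    refine tri.trans ?_
    have hmid : Δa + A * (‖θ u - θn k‖ ^ γ + |u - (k : ℝ) / n| ^ α) ≤
        Δa + A * (C0 ^ γ * (2 * N + Δb ^ γ) * Y + N) := by
      have h4 := add_le_add hpow e2
      have h5 := mul_le_mul_of_nonneg_left h4 hA
      linarith
    refine hmid.trans ?_
    -- final combination
    have c1 : Δa ≤ T * Y := by
      calc Δa ≤ T := by rw [hTdef]; linarith
        _ ≤ T * Y := by exact le_mul_of_one_le_right hT0 hY
    have c2 : N ≤ T * Y := by
      calc N ≤ T := by rw [hTdef]; linarith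
        _ ≤ T * Y := by exact le_mul_of_one_le_right hT0 hY
    have c3 : (2 * N + Δb ^ γ) * Y ≤ 2 * (T * Y) := by
      have : 2 * N + Δb ^ γ ≤ 2 * T := by rw [hTdef]; linarith
      calc (2 * N + Δb ^ γ) * Y ≤ (2 * T) * Y := by exact mul_le_mul_of_nonneg_right this hY0
        _ = 2 * (T * Y) := by ring
    have expand : Δa + A * (C0 ^ γ * (2 * N + Δb ^ γ) * Y + N) =
        Δa + A * C0 ^ γ * ((2 * N + Δb ^ γ) * Y) + A * N := by ring
    rw [expand, hKdef]
    have c4 : A * C0 ^ γ * ((2 * N + Δb ^ γ) * Y) ≤ A * C0 ^ γ * (2 * (T * Y)) :=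
      mul_le_mul_of_nonneg_left c3 hAP
    have c5 : A * N ≤ A * (T * Y) := mul_le_mul_of_nonneg_left c2 hA
    have haTY : 0 ≤ A * (T * Y) := mul_nonneg hA hTY
    have hapTY : 0 ≤ A * C0 ^ γ * (T * Y) := mul_nonneg hAP hTY
    linarith [c1, c4, c5, haTY, hapTY]
  -- entry-wise bound for the matrix
  have hfrac : (i : ℝ) / n ≤ (j : ℝ) / n := by
    gcongr
    all_goals exact_mod_cast hij
  have hBpos : 0 ≤ ((j : ℝ) / n - (i : ℝ) / n) * (K * (T * Y)) := by
    apply mul_nonneg (by linarith)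
    exact mul_nonneg (by linarith) hTY
  have entry : ∀ p q : Fin d,
      |((Matrix.of fun p q =>
            ∫ u in ((i : ℝ) / n)..((j : ℝ) / n), a u (θ u) p q) -
          (1 / (n : ℝ)) • ∑ k ∈ Finset.Ico i j, an ((k : ℝ) / n) (θn k)) p q| ≤
        ((j : ℝ) / n - (i : ℝ) / n) * (K * (T * Y)) := by
    intro p q
    set f : ℝ → ℝ := fun u => a u (θ u) p q with hfdef
    have hfc : Continuous f := cont_entry hγ0 hα0 a ha hθ p q
    set c : ℕ → ℝ := fun k => an ((k : ℝ) / n) (θn k) p q with hcdef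
    have hsplit : (∫ u in ((i : ℝ) / n)..((j : ℝ) / n), f u) =
        ∑ k ∈ Finset.Ico i j, ∫ u in ((k : ℝ) / n)..(((k : ℝ) + 1) / n), f u := by
      rw [← sum_integral_adjacent_intervals_Ico (a := fun k : ℕ => (k : ℝ) / n) hij
        (fun k _ => hfc.intervalIntegrable _ _)]
      refine Finset.sum_congr rfl fun k _ => ?_
      norm_num
    have hM : ((Matrix.of fun p q =>
            ∫ u in ((i : ℝ) / n)..((j : ℝ) / n), a u (θ u) p q) -
          (1 / (n : ℝ)) • ∑ k ∈ Finset.Ico i j, an ((k : ℝ) / n) (θn k)) p q =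
        ∑ k ∈ Finset.Ico i j,
          ∫ u in ((k : ℝ) / n)..(((k : ℝ) + 1) / n), (f u - c k) := by
      have expand2 : ∀ k ∈ Finset.Ico i j,
          (∫ u in ((k : ℝ) / n)..(((k : ℝ) + 1) / n), (f u - c k)) =
          (∫ u in ((k : ℝ) / n)..(((k : ℝ) + 1) / n), f u) - (1 / n) * c k := by
        intro k _
        rw [intervalIntegral.integral_sub (hfc.intervalIntegrable _ _)
          (intervalIntegrable_const), intervalIntegral.integral_const, smul_eq_mul]
        ring_nf
      rw [Finset.sum_congr rfl expand2, Finset.sum_sub_distrib, ← hsplit]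
      simp [Matrix.sub_apply, Matrix.smul_apply, Matrix.of_apply, Matrix.sum_apply,
        smul_eq_mul, Finset.mul_sum, hfdef, hcdef]
    rw [hM]
    have per : ∀ k ∈ Finset.Ico i j,
        |∫ u in ((k : ℝ) / n)..(((k : ℝ) + 1) / n), (f u - c k)| ≤ K * (T * Y) * (1 / n) := by
      intro k hk
      have hle : (k : ℝ) / n ≤ ((k : ℝ) + 1) / n := by
        gcongr
        all_goals linarith
      have hb : ∀ x ∈ Set.uIoc ((k : ℝ) / n) (((k : ℝ) + 1) / n),
          ‖f x - c k‖ ≤ K * (T * Y) := by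
        intro x hx
        rw [Set.uIoc_of_le hle] at hx
        rw [Real.norm_eq_abs]
        exact key k hk x ⟨hx.1.le, hx.2⟩ p q
      have := intervalIntegral.norm_integral_le_of_norm_le_const hb
      rw [Real.norm_eq_abs] at this
      refine this.trans ?_
      have : |((k : ℝ) + 1) / n - (k : ℝ) / n| = 1 / n := by
        rw [show ((k : ℝ) + 1) / n - (k : ℝ) / n = 1 / n by ring]
        exact abs_of_nonneg (by positivity)
      rw [this]
    calc |∑ k ∈ Finset.Ico i j, ∫ u in ((k : ℝ) / n)..(((k : ℝ) + 1) / n), (f u - c k)|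
        ≤ ∑ k ∈ Finset.Ico i j,
            |∫ u in ((k : ℝ) / n)..(((k : ℝ) + 1) / n), (f u - c k)| :=
          by exact Finset.abs_sum_le_sum_abs _ _
      _ ≤ ∑ _k ∈ Finset.Ico i j, K * (T * Y) * (1 / n) := by exact Finset.sum_le_sum per
      _ = ((j : ℝ) - i) * (K * (T * Y) * (1 / n)) := by
          rw [Finset.sum_const, Nat.card_Ico, nsmul_eq_mul, Nat.cast_sub hij]
      _ = ((j : ℝ) / n - (i : ℝ) / n) * (K * (T * Y)) := by ring
  have hfr := frobNorm_le_of_entries _ hBpos entry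
  refine hfr.trans ?_
  have : (d : ℝ) * (((j : ℝ) / n - (i : ℝ) / n) * (K * (T * Y))) =
      ((d : ℝ) * K) * (((j : ℝ) / n - (i : ℝ) / n) * (T * Y)) := by ring
  rw [this]
  have h2 : ((d : ℝ) * K) * (((j : ℝ) / n - (i : ℝ) / n) * (T * Y)) ≤
      ((d : ℝ) * K + 1) * (((j : ℝ) / n - (i : ℝ) / n) * (T * Y)) := by
    apply mul_le_mul_of_nonneg_right (by linarith)
    exact mul_nonneg (by linarith) hTY
  refine h2.trans ?_
  apply le_of_eq
  rw [hTdef, hNdef, hYdef]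
  ring
end

section
/- Let p, q : collections of Gaussian densities on ℝ^d with means μ_p, μ_q and covariance matrices Σ_p, Σ_q, both satisfying Λ^{-1}tI ≤ Σ ≤ ΛtI for some Λ ≥ 1 and t > 0. Then there is a constant C depending only on d and Λ such that sup_{y} |p(y) − q(y)| ≤ C·t^{−(d+1)/2}·(|μ_p − μ_q| + t^{−1/2}|Σ_p − Σ_q|). -/
open Real Matrix

/-- The Gaussian density on `ℝ^d` with mean `μ` and covariance matrix `Σ`. -/
noncomputable def gaussDens (d : ℕ) (μ : Fin d → ℝ) (S : Matrix (Fin d) (Fin d) ℝ)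
    (y : Fin d → ℝ) : ℝ :=
  (2 * Real.pi) ^ (-(d : ℝ) / 2) * S.det ^ (-(1 : ℝ) / 2) *
    Real.exp (-(1 / 2) * (S⁻¹.mulVec (y - μ) ⬝ᵥ (y - μ)))

section AuxST17

variable {d : ℕ}

/-- squared Euclidean norm -/
noncomputable def nsqST17 (x : Fin d → ℝ) : ℝ := ∑ i, x i ^ 2

lemma nsqST17_nonneg (x : Fin d → ℝ) : 0 ≤ nsqST17 x :=
  Finset.sum_nonneg fun _ _ => sq_nonneg _

lemma dot_sq_leST17 (u v : Fin d → ℝ) : (u ⬝ᵥ v) ^ 2 ≤ nsqST17 u * nsqST17 v := by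
  simpa [dotProduct, nsqST17] using Finset.sum_mul_sq_le_sq_mul_sq Finset.univ u v

lemma abs_dot_leST17 (u v : Fin d → ℝ) :
    |u ⬝ᵥ v| ≤ Real.sqrt (nsqST17 u) * Real.sqrt (nsqST17 v) := by
  have h := dot_sq_leST17 u v
  have h2 : |u ⬝ᵥ v| = Real.sqrt ((u ⬝ᵥ v) ^ 2) := (Real.sqrt_sq_eq_abs _).symm
  rw [h2, ← Real.sqrt_mul (nsqST17_nonneg u)]
  exact Real.sqrt_le_sqrt h

lemma symm_dotST17 (S : Matrix (Fin d) (Fin d) ℝ) (hS : S.IsSymm) (u v : Fin d → ℝ) :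
    S *ᵥ u ⬝ᵥ v = S *ᵥ v ⬝ᵥ u := by
  calc S *ᵥ u ⬝ᵥ v = v ⬝ᵥ S *ᵥ u := dotProduct_comm _ _
    _ = v ᵥ* S ⬝ᵥ u := dotProduct_mulVec _ _ _
    _ = S *ᵥ v ⬝ᵥ u := by rw [← mulVec_transpose, hS.eq]

lemma psd_csST17 (S : Matrix (Fin d) (Fin d) ℝ) (hS : S.IsSymm)
    (h0 : ∀ x, 0 ≤ S *ᵥ x ⬝ᵥ x) (u v : Fin d → ℝ) :
    (S *ᵥ u ⬝ᵥ v) ^ 2 ≤ (S *ᵥ u ⬝ᵥ u) * (S *ᵥ v ⬝ᵥ v) := by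
  have key : ∀ lam : ℝ,
      0 ≤ (S *ᵥ v ⬝ᵥ v) * (lam * lam) + (2 * (S *ᵥ u ⬝ᵥ v)) * lam + (S *ᵥ u ⬝ᵥ u) := by
    intro lam
    have h := h0 (u + lam • v)
    have hsym := symm_dotST17 S hS u v
    have hexp : S *ᵥ (u + lam • v) ⬝ᵥ (u + lam • v) =
        (S *ᵥ v ⬝ᵥ v) * (lam * lam) + (2 * (S *ᵥ u ⬝ᵥ v)) * lam + (S *ᵥ u ⬝ᵥ u) := by
      simp only [mulVec_add, mulVec_smul, add_dotProduct, dotProduct_add, smul_dotProduct,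
        dotProduct_smul, smul_eq_mul]
      rw [show S *ᵥ v ⬝ᵥ u = S *ᵥ u ⬝ᵥ v from hsym.symm]
      ring
    linarith [hexp ▸ h]
  have hd := discrim_le_zero key
  unfold discrim at hd
  nlinarith [hd]

lemma nsq_eq_dotST17 (x : Fin d → ℝ) : x ⬝ᵥ x = nsqST17 x := by
  simp [dotProduct, nsqST17, sq]

lemma eig_boundsST17 (S : Matrix (Fin d) (Fin d) ℝ) (hS : S.IsSymm) (α β : ℝ)
    (hl : ∀ x, α * nsqST17 x ≤ S *ᵥ x ⬝ᵥ x) (hu : ∀ x, S *ᵥ x ⬝ᵥ x ≤ β * nsqST17 x) :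
    ∀ i, α ≤ (Matrix.IsHermitian.eigenvalues (hS : S.IsHermitian)) i ∧
      (Matrix.IsHermitian.eigenvalues (hS : S.IsHermitian)) i ≤ β := by
  intro i
  set hA : S.IsHermitian := hS
  set v : Fin d → ℝ := (WithLp.equiv 2 (Fin d → ℝ)) (hA.eigenvectorBasis i) with hv
  have hmv : S *ᵥ v = hA.eigenvalues i • v := hA.mulVec_eigenvectorBasis i
  have hnorm : ‖hA.eigenvectorBasis i‖ = 1 := (hA.eigenvectorBasis.orthonormal).1 i
  have hnsq : nsqST17 v = 1 := by
    have h1 : ‖hA.eigenvectorBasis i‖ ^ 2 = ∑ j, (hA.eigenvectorBasis i j) ^ 2 := by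
      rw [EuclideanSpace.norm_eq]
      rw [Real.sq_sqrt (Finset.sum_nonneg fun j _ => sq_nonneg _)]
      simp [sq_abs]
    rw [hnorm] at h1
    simpa [nsqST17, hv] using h1.symm
  have hform : S *ᵥ v ⬝ᵥ v = hA.eigenvalues i := by
    rw [hmv, smul_dotProduct, smul_eq_mul]
    have : v ⬝ᵥ v = nsqST17 v := by simp [dotProduct, nsqST17, sq]
    rw [this, hnsq, mul_one]
  constructor
  · have := hl v; rw [hform, hnsq, mul_one] at this; exact this
  · have := hu v; rw [hform, hnsq, mul_one] at this; exact this

lemma det_boundsST17 (S : Matrix (Fin d) (Fin d) ℝ) (hS : S.IsSymm) (α β : ℝ)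
    (hα : 0 ≤ α)
    (hl : ∀ x, α * nsqST17 x ≤ S *ᵥ x ⬝ᵥ x) (hu : ∀ x, S *ᵥ x ⬝ᵥ x ≤ β * nsqST17 x) :
    α ^ d ≤ S.det ∧ S.det ≤ β ^ d := by
  have hdet : S.det = ∏ i, (Matrix.IsHermitian.eigenvalues (hS : S.IsHermitian)) i := by
    simpa using (Matrix.IsHermitian.det_eq_prod_eigenvalues (hS : S.IsHermitian))
  have hb := eig_boundsST17 S hS α β hl hu
  constructor
  · rw [hdet]
    calc α ^ d = ∏ _i : Fin d, α := by rw [Finset.prod_const]; simp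
    _ ≤ _ := Finset.prod_le_prod (fun i _ => hα) (fun i _ => (hb i).1)
  · rw [hdet]
    calc _ ≤ ∏ _i : Fin d, β := Finset.prod_le_prod
          (fun i _ => le_trans hα (hb i).1) (fun i _ => (hb i).2)
    _ = β ^ d := by rw [Finset.prod_const]; simp

lemma inv_form_boundsST17 (S : Matrix (Fin d) (Fin d) ℝ) (hS : S.IsSymm) (α β : ℝ)
    (hα : 0 < α) (hβ : 0 < β) (hdet : IsUnit S.det)
    (hl : ∀ x, α * nsqST17 x ≤ S *ᵥ x ⬝ᵥ x) (hu : ∀ x, S *ᵥ x ⬝ᵥ x ≤ β * nsqST17 x) :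
    ∀ x, β⁻¹ * nsqST17 x ≤ S⁻¹ *ᵥ x ⬝ᵥ x ∧ S⁻¹ *ᵥ x ⬝ᵥ x ≤ α⁻¹ * nsqST17 x := by
  intro x
  set y : Fin d → ℝ := S⁻¹ *ᵥ x with hy
  have hx : S *ᵥ y = x := by rw [hy, mulVec_mulVec, Matrix.mul_nonsing_inv S hdet, one_mulVec]
  have hform : S⁻¹ *ᵥ x ⬝ᵥ x = S *ᵥ y ⬝ᵥ y := by
    rw [hx, ← hy]; exact dotProduct_comm _ _
  have h0 : ∀ z, 0 ≤ S *ᵥ z ⬝ᵥ z := fun z =>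
    le_trans (mul_nonneg hα.le (nsqST17_nonneg z)) (hl z)
  set B : ℝ := S *ᵥ y ⬝ᵥ y with hB
  have hBnn : 0 ≤ B := h0 y
  rw [hform]
  constructor
  · have hcs := psd_csST17 S hS h0 y x
    rw [hx] at hcs
    have hxy : x ⬝ᵥ y = B := by rw [hB, hx]
    rw [hxy, nsq_eq_dotST17] at hcs
    have h2 : S *ᵥ x ⬝ᵥ x ≤ β * nsqST17 x := hu x
    have key : nsqST17 x * nsqST17 x ≤ (β * B) * nsqST17 x := by
      nlinarith [nsqST17_nonneg x]
    have hfin : nsqST17 x ≤ β * B := by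
      rcases (nsqST17_nonneg x).eq_or_lt with h | h
      · rw [← h]; exact mul_nonneg hβ.le hBnn
      · exact le_of_mul_le_mul_right key h
    calc β⁻¹ * nsqST17 x ≤ β⁻¹ * (β * B) := by
          exact mul_le_mul_of_nonneg_left hfin (by positivity)
    _ = B := by field_simp
  · have h1 : B ^ 2 ≤ nsqST17 x * nsqST17 y := by
      have := dot_sq_leST17 (S *ᵥ y) y
      rw [hx] at this
      have hxy : x ⬝ᵥ y = B := by rw [hB, hx]
      rwa [hxy] at this
    have h2 : α * nsqST17 y ≤ B := hl y
    have key : B * B ≤ (α⁻¹ * nsqST17 x) * B := by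
      rcases hBnn.eq_or_lt with h | h
      · rw [← h]; simp
      · have : α * (B * B) ≤ α * ((α⁻¹ * nsqST17 x) * B) := by
          have e : α * ((α⁻¹ * nsqST17 x) * B) = nsqST17 x * B := by field_simp
          rw [e]; nlinarith [nsqST17_nonneg x, nsqST17_nonneg y]
        exact le_of_mul_le_mul_left this hα
    rcases hBnn.eq_or_lt with h | h
    · rw [← h]; exact mul_nonneg (by positivity) (nsqST17_nonneg x)
    · exact le_of_mul_le_mul_right key h

lemma op_boundST17 (M : Matrix (Fin d) (Fin d) ℝ) (hM : M.IsSymm) (β : ℝ) (hβ : 0 ≤ β)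
    (h0 : ∀ x, 0 ≤ M *ᵥ x ⬝ᵥ x) (hu : ∀ x, M *ᵥ x ⬝ᵥ x ≤ β * nsqST17 x) (z : Fin d → ℝ) :
    Real.sqrt (nsqST17 (M *ᵥ z)) ≤ β * Real.sqrt (nsqST17 z) := by
  have key : nsqST17 (M *ᵥ z) ≤ β ^ 2 * nsqST17 z := by
    set N : ℝ := nsqST17 (M *ᵥ z) with hN
    have hNnn : 0 ≤ N := nsqST17_nonneg _
    have hcs := psd_csST17 M hM h0 z (M *ᵥ z)
    rw [nsq_eq_dotST17 (M *ᵥ z)] at hcs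
    have h2 : M *ᵥ z ⬝ᵥ z ≤ β * nsqST17 z := hu z
    have h3 : M *ᵥ (M *ᵥ z) ⬝ᵥ (M *ᵥ z) ≤ β * N := hu _
    have key2 : N * N ≤ (β ^ 2 * nsqST17 z) * N := by
      nlinarith [h0 z, h0 (M *ᵥ z), nsqST17_nonneg z]
    rcases hNnn.eq_or_lt with h | h
    · rw [← h]; exact mul_nonneg (by positivity) (nsqST17_nonneg z)
    · exact le_of_mul_le_mul_right key2 h
  calc Real.sqrt (nsqST17 (M *ᵥ z)) ≤ Real.sqrt (β ^ 2 * nsqST17 z) := Real.sqrt_le_sqrt key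
  _ = β * Real.sqrt (nsqST17 z) := by
      rw [Real.sqrt_mul (sq_nonneg β), Real.sqrt_sq hβ]

lemma frob_boundST17 (M : Matrix (Fin d) (Fin d) ℝ) (u v : Fin d → ℝ) :
    |M *ᵥ u ⬝ᵥ v| ≤ Real.sqrt (∑ i, ∑ j, M i j ^ 2) *
      (Real.sqrt (nsqST17 u) * Real.sqrt (nsqST17 v)) := by
  have h1 : (M *ᵥ u ⬝ᵥ v) ^ 2 ≤ (∑ i, ∑ j, M i j ^ 2) * (nsqST17 u * nsqST17 v) := by
    have hcs : (M *ᵥ u ⬝ᵥ v) ^ 2 ≤ (∑ i, (M *ᵥ u) i ^ 2) * nsqST17 v := by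
      simpa [dotProduct, nsqST17] using Finset.sum_mul_sq_le_sq_mul_sq Finset.univ (M *ᵥ u) v
    have hrow : ∀ i, (M *ᵥ u) i ^ 2 ≤ (∑ j, M i j ^ 2) * nsqST17 u := by
      intro i
      simpa [mulVec, dotProduct, nsqST17] using
        Finset.sum_mul_sq_le_sq_mul_sq Finset.univ (M i) u
    have hsum : (∑ i, (M *ᵥ u) i ^ 2) ≤ (∑ i, ∑ j, M i j ^ 2) * nsqST17 u := by
      rw [Finset.sum_mul]
      exact Finset.sum_le_sum fun i _ => hrow i
    calc (M *ᵥ u ⬝ᵥ v) ^ 2 ≤ (∑ i, (M *ᵥ u) i ^ 2) * nsqST17 v := hcs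
    _ ≤ ((∑ i, ∑ j, M i j ^ 2) * nsqST17 u) * nsqST17 v :=
        mul_le_mul_of_nonneg_right hsum (nsqST17_nonneg v)
    _ = (∑ i, ∑ j, M i j ^ 2) * (nsqST17 u * nsqST17 v) := by ring
  have h2 : |M *ᵥ u ⬝ᵥ v| = Real.sqrt ((M *ᵥ u ⬝ᵥ v) ^ 2) := (Real.sqrt_sq_eq_abs _).symm
  rw [h2]
  calc Real.sqrt ((M *ᵥ u ⬝ᵥ v) ^ 2)
      ≤ Real.sqrt ((∑ i, ∑ j, M i j ^ 2) * (nsqST17 u * nsqST17 v)) := Real.sqrt_le_sqrt h1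
  _ = _ := by
      rw [Real.sqrt_mul (show (0:ℝ) ≤ ∑ i, ∑ j, M i j ^ 2 from
          Finset.sum_nonneg fun i _ => Finset.sum_nonneg fun j _ => sq_nonneg _),
        Real.sqrt_mul (nsqST17_nonneg u)]

lemma sqrt_nsq_addST17 (u v : Fin d → ℝ) :
    Real.sqrt (nsqST17 (u + v)) ≤ Real.sqrt (nsqST17 u) + Real.sqrt (nsqST17 v) := by
  have hdot := abs_dot_leST17 u v
  have hexp : nsqST17 (u + v) = nsqST17 u + 2 * (u ⬝ᵥ v) + nsqST17 v := by
    simp only [nsqST17, dotProduct, Pi.add_apply]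
    rw [Finset.mul_sum, ← Finset.sum_add_distrib, ← Finset.sum_add_distrib]
    exact Finset.sum_congr rfl fun i _ => by ring
  have h1 : nsqST17 (u + v) ≤ (Real.sqrt (nsqST17 u) + Real.sqrt (nsqST17 v)) ^ 2 := by
    rw [hexp]
    have e1 : Real.sqrt (nsqST17 u) ^ 2 = nsqST17 u := Real.sq_sqrt (nsqST17_nonneg u)
    have e2 : Real.sqrt (nsqST17 v) ^ 2 = nsqST17 v := Real.sq_sqrt (nsqST17_nonneg v)
    nlinarith [abs_le.mp hdot]
  calc Real.sqrt (nsqST17 (u + v))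
      ≤ Real.sqrt ((Real.sqrt (nsqST17 u) + Real.sqrt (nsqST17 v)) ^ 2) := Real.sqrt_le_sqrt h1
  _ = _ := Real.sqrt_sq (by positivity)

lemma exp_sub_exp_leST17 (a b : ℝ) :
    |Real.exp a - Real.exp b| ≤ Real.exp (max a b) * |a - b| := by
  have key : ∀ x y : ℝ, y ≤ x → Real.exp x - Real.exp y ≤ Real.exp x * (x - y) := by
    intro x y hxy
    have h := Real.add_one_le_exp (y - x)
    have hex := Real.exp_pos x
    have : Real.exp y = Real.exp x * Real.exp (y - x) := by
      rw [← Real.exp_add]; ring_nf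
    nlinarith
  rcases le_total b a with h | h
  · rw [abs_of_nonneg (by linarith [Real.exp_le_exp.mpr h] : (0:ℝ) ≤ Real.exp a - Real.exp b),
      max_eq_left h, abs_of_nonneg (by linarith : (0:ℝ) ≤ a - b)]
    exact key a b h
  · rw [abs_of_nonpos (by linarith [Real.exp_le_exp.mpr h] : Real.exp a - Real.exp b ≤ 0),
      max_eq_right h, abs_of_nonpos (by linarith : a - b ≤ 0)]
    have := key b a h
    linarith

lemma det_row_boundST17 (M : Matrix (Fin d) (Fin d) ℝ) :
    ‖M.det‖ ≤ (d.factorial : ℝ) * ∏ i, ‖M i‖ := by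
  rw [Matrix.det_apply]
  calc ‖∑ σ : Equiv.Perm (Fin d), Equiv.Perm.sign σ • ∏ i, M (σ i) i‖
      ≤ ∑ σ : Equiv.Perm (Fin d), ‖Equiv.Perm.sign σ • ∏ i, M (σ i) i‖ :=
        norm_sum_le _ _
    _ ≤ ∑ _σ : Equiv.Perm (Fin d), ∏ i, ‖M i‖ := by
        apply Finset.sum_le_sum
        intro σ _
        have h1 : ‖Equiv.Perm.sign σ • ∏ i, M (σ i) i‖ = ‖∏ i, M (σ i) i‖ := by
          rcases Int.units_eq_one_or (Equiv.Perm.sign σ) with h | h <;>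
            simp [h, norm_neg]
        rw [h1]
        have h2 : ‖∏ i, M (σ i) i‖ ≤ ∏ i, ‖M (σ i)‖ := by
          rw [norm_prod]
          exact Finset.prod_le_prod (fun i _ => norm_nonneg _)
            (fun i _ => norm_le_pi_norm (M (σ i)) i)
        refine h2.trans ?_
        rw [show (∏ i, ‖M (σ i)‖) = ∏ i, ‖M i‖ from Equiv.prod_comp σ fun i => ‖M i‖]
    _ = (d.factorial : ℝ) * ∏ i, ‖M i‖ := by
        rw [Finset.sum_const, Finset.card_univ, Fintype.card_perm, Fintype.card_fin,
          nsmul_eq_mul]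

noncomputable def detCLMST17 (d : ℕ) :
    ContinuousMultilinearMap ℝ (fun _ : Fin d => Fin d → ℝ) ℝ :=
  MultilinearMap.mkContinuous
    (Matrix.detRowAlternating : (Fin d → ℝ) [⋀^Fin d]→ₗ[ℝ] ℝ).toMultilinearMap
    (d.factorial : ℝ) (fun m => det_row_boundST17 (Matrix.of m))

lemma det_lipST17 (A B : Matrix (Fin d) (Fin d) ℝ) (R F : ℝ) (hR0 : 0 ≤ R) (hF0 : 0 ≤ F)
    (hA : ∀ i j, |A i j| ≤ R) (hB : ∀ i j, |B i j| ≤ R)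
    (hAB : ∀ i j, |A i j - B i j| ≤ F) :
    |A.det - B.det| ≤ (d.factorial : ℝ) * d * R ^ (d - 1) * F := by
  have hnorm : ‖detCLMST17 d‖ ≤ (d.factorial : ℝ) :=
    MultilinearMap.mkContinuous_norm_le _ (by positivity) _
  set A' : (Fin d) → (Fin d) → ℝ := A with hA'
  set B' : (Fin d) → (Fin d) → ℝ := B with hB'
  have key := (detCLMST17 d).norm_image_sub_le A' B'
  rw [show (detCLMST17 d) A' = A.det from rfl, show (detCLMST17 d) B' = B.det from rfl] at key
  have hcard : Fintype.card (Fin d) = d := Fintype.card_fin d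
  rw [hcard] at key
  have hnA : ‖A'‖ ≤ R := by
    rw [pi_norm_le_iff_of_nonneg hR0]
    intro i
    rw [pi_norm_le_iff_of_nonneg hR0]
    intro j
    exact hA i j
  have hnB : ‖B'‖ ≤ R := by
    rw [pi_norm_le_iff_of_nonneg hR0]
    intro i
    rw [pi_norm_le_iff_of_nonneg hR0]
    intro j
    exact hB i j
  have hnAB : ‖(A' - B')‖ ≤ F := by
    rw [pi_norm_le_iff_of_nonneg hF0]
    intro i
    rw [pi_norm_le_iff_of_nonneg hF0]
    intro j
    exact hAB i j
  have hmax : max ‖A'‖ ‖B'‖ ≤ R := max_le hnA hnB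
  have habs : |A.det - B.det| = ‖A.det - B.det‖ := rfl
  rw [habs]
  calc ‖A.det - B.det‖
      ≤ ‖detCLMST17 d‖ * d * (max ‖A'‖ ‖B'‖) ^ (d - 1) * ‖(A' - B')‖ := key
  _ ≤ (d.factorial : ℝ) * d * R ^ (d - 1) * F := by
      have h1 : (max ‖A'‖ ‖B'‖) ^ (d-1) ≤ R ^ (d-1) :=
        pow_le_pow_left₀ (le_max_iff.mpr (Or.inl (norm_nonneg _))) hmax _
      have hn0 : (0:ℝ) ≤ ‖detCLMST17 d‖ := norm_nonneg _
      have hmn : (0:ℝ) ≤ (max ‖A'‖ ‖B'‖) ^ (d-1) := by positivity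
      apply mul_le_mul
      · apply mul_le_mul
        · exact mul_le_mul_of_nonneg_right hnorm (by positivity)
        · exact h1
        · exact hmn
        · positivity
      · exact hnAB
      · exact norm_nonneg _
      · positivity

lemma entry_boundST17 (S : Matrix (Fin d) (Fin d) ℝ) (hS : S.IsSymm) (β : ℝ)
    (h0 : ∀ x, 0 ≤ S *ᵥ x ⬝ᵥ x) (hu : ∀ x, S *ᵥ x ⬝ᵥ x ≤ β * nsqST17 x) (i j : Fin d) :
    |S i j| ≤ β := by
  have hβ : 0 ≤ β := by
    have h1 := h0 (Pi.single i 1)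
    have h2 := hu (Pi.single i 1)
    have hn : nsqST17 (Pi.single i (1:ℝ)) = 1 := by
      simp [nsqST17, Pi.single_apply]
    rw [hn, mul_one] at h2
    linarith
  have hsingle : ∀ k : Fin d, nsqST17 (Pi.single k (1:ℝ)) = 1 := by
    intro k; simp [nsqST17, Pi.single_apply]
  have hform : ∀ k l : Fin d, S *ᵥ Pi.single l 1 ⬝ᵥ Pi.single k 1 = S k l := by
    intro k l
    simp [mulVec_single, dotProduct, Pi.single_apply]
  have hcs := psd_csST17 S hS h0 (Pi.single j 1) (Pi.single i 1)
  rw [hform i j, hform j j, hform i i] at hcs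
  have hdj := hu (Pi.single j 1); rw [hsingle j, mul_one] at hdj
  have hdi := hu (Pi.single i 1); rw [hsingle i, mul_one] at hdi
  have hdj0 : 0 ≤ S *ᵥ Pi.single j 1 ⬝ᵥ Pi.single j 1 := h0 _
  have hdi0 : 0 ≤ S *ᵥ Pi.single i 1 ⬝ᵥ Pi.single i 1 := h0 _
  rw [hform j j] at hdj0 hdj
  rw [hform i i] at hdi0 hdi
  have : (S i j) ^ 2 ≤ β ^ 2 := by nlinarith
  calc |S i j| = Real.sqrt ((S i j)^2) := (Real.sqrt_sq_eq_abs _).symm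
  _ ≤ Real.sqrt (β^2) := Real.sqrt_le_sqrt this
  _ = β := Real.sqrt_sq hβ

lemma exp_decay_sqST17 (Λ t s : ℝ) (hΛ : 1 ≤ Λ) (ht : 0 < t) :
    Real.exp (-(s^2/(2*Λ*t))) * (s + Real.sqrt t)^2 ≤ 6*Λ*t := by
  set q : ℝ := s^2/(2*Λ*t) with hq
  have hΛ0 : (0:ℝ) < Λ := lt_of_lt_of_le one_pos hΛ
  have hq0 : 0 ≤ q := by positivity
  have e3 : 0 ≤ Real.exp (-q) := (Real.exp_pos _).le
  have e1 : Real.exp (-q) ≤ 1 := Real.exp_le_one_iff.mpr (by linarith)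
  have e2 : Real.exp (-q) * (1 + q) ≤ 1 := by
    have h := Real.add_one_le_exp q
    have : Real.exp (-q) * (1 + q) ≤ Real.exp (-q) * Real.exp q :=
      mul_le_mul_of_nonneg_left (by linarith) e3
    rwa [← Real.exp_add, neg_add_cancel, Real.exp_zero] at this
  have h4 : Real.exp (-q) * q ≤ 1 := by nlinarith
  have hsq : s^2 = 2*Λ*t*q := by rw [hq]; field_simp
  have hsqt : (s + Real.sqrt t)^2 ≤ 2*s^2 + 2*t := by
    nlinarith [sq_nonneg (s - Real.sqrt t), Real.sq_sqrt ht.le]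
  calc Real.exp (-q) * (s + Real.sqrt t)^2 ≤ Real.exp (-q) * (2*s^2 + 2*t) :=
      mul_le_mul_of_nonneg_left hsqt e3
  _ = 4*Λ*t*(Real.exp (-q) * q) + 2*t*Real.exp (-q) := by rw [hsq]; ring
  _ ≤ 4*Λ*t*1 + 2*t*1 := by
      have h5 : 4*Λ*t*(Real.exp (-q) * q) ≤ 4*Λ*t*1 :=
        mul_le_mul_of_nonneg_left h4 (by positivity)
      have h6 : 2*t*Real.exp (-q) ≤ 2*t*1 := mul_le_mul_of_nonneg_left e1 (by positivity)
      linarith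
  _ ≤ 6*Λ*t := by nlinarith

lemma rpow_neg_half_eqST17 (x : ℝ) (hx : 0 < x) : x ^ (-(1:ℝ)/2) = (Real.sqrt x)⁻¹ := by
  rw [show (-(1:ℝ)/2) = -(1/2 : ℝ) by norm_num, Real.rpow_neg hx.le, Real.sqrt_eq_rpow]

structure GoodMatST17 (d : ℕ) (Λ t : ℝ) (S : Matrix (Fin d) (Fin d) ℝ) : Prop where
  detlow : (Λ⁻¹*t)^d ≤ S.det
  dethigh : S.det ≤ (Λ*t)^d
  detunit : IsUnit S.det
  invsymm : (S⁻¹).IsSymm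
  invlow : ∀ x, (Λ*t)⁻¹ * nsqST17 x ≤ S⁻¹ *ᵥ x ⬝ᵥ x
  invhigh : ∀ x, S⁻¹ *ᵥ x ⬝ᵥ x ≤ (Λ⁻¹*t)⁻¹ * nsqST17 x
  invop : ∀ z, Real.sqrt (nsqST17 (S⁻¹ *ᵥ z)) ≤ (Λ⁻¹*t)⁻¹ * Real.sqrt (nsqST17 z)
  entry : ∀ i j, |S i j| ≤ Λ*t

lemma packST17 (Λ t : ℝ) (hΛ : 1 ≤ Λ) (ht : 0 < t)
    (S : Matrix (Fin d) (Fin d) ℝ) (hS : S.IsSymm)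
    (hl : ∀ x, Λ⁻¹ * t * nsqST17 x ≤ S *ᵥ x ⬝ᵥ x)
    (hu : ∀ x, S *ᵥ x ⬝ᵥ x ≤ Λ * t * nsqST17 x) : GoodMatST17 d Λ t S := by
  have hΛ0 : (0:ℝ) < Λ := lt_of_lt_of_le one_pos hΛ
  have hα : (0:ℝ) < Λ⁻¹ * t := by positivity
  have hβ : (0:ℝ) < Λ * t := by positivity
  have h0 : ∀ x, 0 ≤ S *ᵥ x ⬝ᵥ x := fun x =>
    le_trans (mul_nonneg hα.le (nsqST17_nonneg x)) (hl x)
  obtain ⟨hdl, hdh⟩ := det_boundsST17 S hS _ _ hα.le hl hu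
  have hdet : IsUnit S.det :=
    isUnit_iff_ne_zero.mpr (ne_of_gt (lt_of_lt_of_le (pow_pos hα d) hdl))
  have hinv := inv_form_boundsST17 S hS _ _ hα hβ hdet hl hu
  have hinvsymm : (S⁻¹).IsSymm := by
    unfold Matrix.IsSymm
    rw [Matrix.transpose_nonsing_inv, hS.eq]
  have hinv0 : ∀ x, 0 ≤ S⁻¹ *ᵥ x ⬝ᵥ x := fun x =>
    le_trans (mul_nonneg (by positivity) (nsqST17_nonneg x)) (hinv x).1
  exact {
    detlow := hdl
    dethigh := hdh
    detunit := hdet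
    invsymm := hinvsymm
    invlow := fun x => (hinv x).1
    invhigh := fun x => (hinv x).2
    invop := fun z => op_boundST17 S⁻¹ hinvsymm _ (by positivity) hinv0
      (fun x => (hinv x).2) z
    entry := fun i j => entry_boundST17 S hS _ h0 hu i j }

end AuxST17

lemma power_boundST17 (Λ t : ℝ) (hΛ : 1 ≤ Λ) (ht : 0 < t) (d : ℕ) (hd : 1 ≤ d) :
    ((Λ*t)^(d-1) : ℝ) / (2 * Real.sqrt ((Λ⁻¹*t)^d) * (Λ⁻¹*t)^d) ≤
      Λ ^ ((5*(d:ℝ))/2) * (t ^ (-((d:ℝ)+1)/2) * t ^ (-(1:ℝ)/2)) := by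
  have hΛ0 : (0:ℝ) < Λ := lt_of_lt_of_le one_pos hΛ
  have hα : (0:ℝ) < Λ⁻¹ * t := by positivity
  -- convert everything to rpow in bases Λ and t
  have h3 : ((Λ*t)^(d-1) : ℝ) = Λ ^ ((d:ℝ)-1) * t ^ ((d:ℝ)-1) := by
    rw [← Real.rpow_natCast (Λ*t) (d-1), Nat.cast_sub hd, Nat.cast_one,
      Real.mul_rpow hΛ0.le ht.le]
  have h2 : ((Λ⁻¹*t)^d : ℝ) = Λ ^ (-(d:ℝ)) * t ^ ((d:ℝ)) := by
    rw [← Real.rpow_natCast (Λ⁻¹*t) d, Real.mul_rpow (by positivity) ht.le,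
      Real.inv_rpow hΛ0.le, ← Real.rpow_neg hΛ0.le]
  have h1 : Real.sqrt ((Λ⁻¹*t)^d) = Λ ^ (-(d:ℝ)/2) * t ^ ((d:ℝ)/2) := by
    rw [Real.sqrt_eq_rpow, h2, Real.mul_rpow (by positivity) (by positivity),
      ← Real.rpow_mul hΛ0.le, ← Real.rpow_mul ht.le]
    congr 1
    · congr 1; ring
    · congr 1; ring
  rw [h3, h1, h2]
  have key : Λ ^ ((d:ℝ)-1) * t ^ ((d:ℝ)-1) /
      (2 * (Λ ^ (-(d:ℝ)/2) * t ^ ((d:ℝ)/2)) * (Λ ^ (-(d:ℝ)) * t ^ ((d:ℝ)))) =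
      2⁻¹ * Λ ^ ((5*(d:ℝ))/2 - 1) * (t ^ (-((d:ℝ)+1)/2) * t ^ (-(1:ℝ)/2)) := by
    rw [div_eq_iff (by positivity)]
    rw [show (2:ℝ)⁻¹ * Λ ^ ((5*(d:ℝ))/2 - 1) * (t ^ (-((d:ℝ)+1)/2) * t ^ (-(1:ℝ)/2)) *
        (2 * (Λ ^ (-(d:ℝ)/2) * t ^ ((d:ℝ)/2)) * (Λ ^ (-(d:ℝ)) * t ^ ((d:ℝ)))) =
        (2⁻¹*2) * (Λ ^ ((5*(d:ℝ))/2 - 1) * Λ ^ (-(d:ℝ)/2) * Λ ^ (-(d:ℝ))) *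
        (t ^ (-((d:ℝ)+1)/2) * t ^ (-(1:ℝ)/2) * t ^ ((d:ℝ)/2) * t ^ ((d:ℝ))) from by ring]
    rw [← Real.rpow_add hΛ0, ← Real.rpow_add hΛ0, ← Real.rpow_add ht, ← Real.rpow_add ht,
      ← Real.rpow_add ht]
    rw [show (5*(d:ℝ))/2 - 1 + -(d:ℝ)/2 + -(d:ℝ) = (d:ℝ)-1 by ring,
      show -((d:ℝ)+1)/2 + -(1:ℝ)/2 + (d:ℝ)/2 + (d:ℝ) = (d:ℝ)-1 by ring]
    norm_num
  rw [key]
  have hstep : Λ ^ ((5*(d:ℝ))/2 - 1) ≤ Λ ^ ((5*(d:ℝ))/2) :=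
    Real.rpow_le_rpow_of_exponent_le hΛ (by linarith)
  have htp : (0:ℝ) < t ^ (-((d:ℝ)+1)/2) * t ^ (-(1:ℝ)/2) := by positivity
  nlinarith [Real.rpow_pos_of_pos hΛ0 ((5*(d:ℝ))/2 - 1), htp,
    mul_le_mul_of_nonneg_right hstep htp.le]

set_option maxHeartbeats 1000000 in
/-- uniform comparison of two Gaussian densities with comparable
means and covariances under the ellipticity condition `Λ⁻¹ t I ≤ Σ ≤ Λ t I`. -/
theorem stmt_17 (d : ℕ) (Λ : ℝ) (hΛ : 1 ≤ Λ) :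
    ∃ C > 0,
      ∀ (t : ℝ), 0 < t →
      ∀ (μp μq : Fin d → ℝ) (Sp Sq : Matrix (Fin d) (Fin d) ℝ),
        Sp.IsSymm → Sq.IsSymm →
        (∀ x : Fin d → ℝ, Λ⁻¹ * t * (∑ i, x i ^ 2) ≤ Sp.mulVec x ⬝ᵥ x) →
        (∀ x : Fin d → ℝ, Sp.mulVec x ⬝ᵥ x ≤ Λ * t * (∑ i, x i ^ 2)) →
        (∀ x : Fin d → ℝ, Λ⁻¹ * t * (∑ i, x i ^ 2) ≤ Sq.mulVec x ⬝ᵥ x) →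
        (∀ x : Fin d → ℝ, Sq.mulVec x ⬝ᵥ x ≤ Λ * t * (∑ i, x i ^ 2)) →
        ∀ y : Fin d → ℝ,
          |gaussDens d μp Sp y - gaussDens d μq Sq y| ≤
            C * t ^ (-((d : ℝ) + 1) / 2) *
              (Real.sqrt (∑ i, (μp i - μq i) ^ 2) +
                t ^ (-(1 : ℝ) / 2) *
                  Real.sqrt (∑ i, ∑ j, (Sp i j - Sq i j) ^ 2)) := by
  have hΛ0 : (0:ℝ) < Λ := lt_of_lt_of_le one_pos hΛ
  rcases Nat.eq_zero_or_pos d with hd0 | hd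
  · subst hd0
    refine ⟨1, one_pos, ?_⟩
    intro t ht μp μq Sp Sq _ _ _ _ _ _ y
    have hpq : gaussDens 0 μp Sp y = gaussDens 0 μq Sq y := by
      simp [gaussDens, Matrix.det_isEmpty, dotProduct]
    rw [hpq, sub_self, abs_zero]
    positivity
  · have hd1 : 1 ≤ d := hd
    refine ⟨2*Λ^((d:ℝ)/2) + 6*Λ^3*Λ^((d:ℝ)/2) + (d.factorial:ℝ)*d*Λ^((5*(d:ℝ))/2),
      by positivity, ?_⟩
    intro t ht μp μq Sp Sq hSp hSq hpl hpu hql hqu y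
    set K0 : ℝ := Λ ^ ((d:ℝ)/2) with hK0def
    have hK0 : 0 < K0 := Real.rpow_pos_of_pos hΛ0 _
    have hα : (0:ℝ) < Λ⁻¹ * t := by positivity
    have hβ : (0:ℝ) < Λ * t := by positivity
    have Pp := packST17 Λ t hΛ ht Sp hSp (fun x => hpl x) (fun x => hpu x)
    have Pq := packST17 Λ t hΛ ht Sq hSq (fun x => hql x) (fun x => hqu x)
    set Mn := Real.sqrt (∑ i, (μp i - μq i)^2) with hMndef
    set F := Real.sqrt (∑ i, ∑ j, (Sp i j - Sq i j)^2) with hFdef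
    set P := t ^ (-((d : ℝ) + 1) / 2) with hPdef
    set τ := t ^ (-(1 : ℝ) / 2) with hτdef
    have hMn0 : 0 ≤ Mn := Real.sqrt_nonneg _
    have hF0 : 0 ≤ F := Real.sqrt_nonneg _
    have hP0 : 0 < P := Real.rpow_pos_of_pos ht _
    have hτ0 : 0 < τ := Real.rpow_pos_of_pos ht _
    have hst0 : 0 < Real.sqrt t := Real.sqrt_pos.mpr ht
    set c2 : ℝ := (2 * Real.pi) ^ (-(d:ℝ)/2) with hc2def
    have hπ : (1:ℝ) ≤ 2*Real.pi := by linarith only [Real.pi_gt_three]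
    have hc2pos : 0 < c2 := Real.rpow_pos_of_pos (by linarith only [Real.pi_gt_three]) _
    have hc2le : c2 ≤ 1 := Real.rpow_le_one_of_one_le_of_nonpos hπ (by
      have h0d : (0:ℝ) ≤ (d:ℝ) := Nat.cast_nonneg d
      linarith only [h0d])
    set zp := y - μp with hzp
    set zq := y - μq with hzq
    set Ap := -(1/2 : ℝ) * (Sp⁻¹ *ᵥ zp ⬝ᵥ zp) with hApdef
    set Aq := -(1/2 : ℝ) * (Sq⁻¹ *ᵥ zq ⬝ᵥ zq) with hAqdef
    set ap := Sp.det ^ (-(1:ℝ)/2) with hapdef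
    set bq := Sq.det ^ (-(1:ℝ)/2) with hbqdef
    have hgp : gaussDens d μp Sp y = c2 * ap * Real.exp Ap := rfl
    have hgq : gaussDens d μq Sq y = c2 * bq * Real.exp Aq := rfl
    have hform_p : 0 ≤ Sp⁻¹ *ᵥ zp ⬝ᵥ zp :=
      le_trans (mul_nonneg (inv_nonneg.mpr hβ.le) (nsqST17_nonneg _)) (Pp.invlow zp)
    have hform_q : 0 ≤ Sq⁻¹ *ᵥ zq ⬝ᵥ zq :=
      le_trans (mul_nonneg (inv_nonneg.mpr hβ.le) (nsqST17_nonneg _)) (Pq.invlow zq)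
    have hXle1 : Real.exp Ap ≤ 1 := Real.exp_le_one_iff.mpr (by rw [hApdef]; linarith only [hform_p])
    have hYle1 : Real.exp Aq ≤ 1 := Real.exp_le_one_iff.mpr (by rw [hAqdef]; linarith only [hform_q])
    have hdp0 : (0:ℝ) < Sp.det := lt_of_lt_of_le (pow_pos hα d) Pp.detlow
    have hdq0 : (0:ℝ) < Sq.det := lt_of_lt_of_le (pow_pos hα d) Pq.detlow
    have hap0 : 0 < ap := Real.rpow_pos_of_pos hdp0 _
    have hbq0 : 0 < bq := Real.rpow_pos_of_pos hdq0 _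
    have hdetpow : ((Λ⁻¹*t)^d : ℝ) ^ (-(1:ℝ)/2) = K0 * t ^ (-(d:ℝ)/2) := by
      rw [← Real.rpow_natCast (Λ⁻¹*t) d, ← Real.rpow_mul hα.le,
        Real.mul_rpow (by positivity) ht.le, Real.inv_rpow hΛ0.le, ← Real.rpow_neg hΛ0.le,
        hK0def]
      congr 1
      · congr 1; ring
      · congr 1; ring
    have hap_le : ap ≤ K0 * t ^ (-(d:ℝ)/2) := by
      rw [hapdef]
      calc Sp.det ^ (-(1:ℝ)/2) ≤ ((Λ⁻¹*t)^d : ℝ) ^ (-(1:ℝ)/2) :=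
        Real.rpow_le_rpow_of_nonpos (pow_pos hα d) Pp.detlow (by norm_num)
      _ = _ := hdetpow
    have hbq_le : bq ≤ K0 * t ^ (-(d:ℝ)/2) := by
      rw [hbqdef]
      calc Sq.det ^ (-(1:ℝ)/2) ≤ ((Λ⁻¹*t)^d : ℝ) ^ (-(1:ℝ)/2) :=
        Real.rpow_le_rpow_of_nonpos (pow_pos hα d) Pq.detlow (by norm_num)
      _ = _ := hdetpow
    rcases le_total (Real.sqrt t) (Mn + τ * F) with hcase | hcase
    · -- branch A : trivial bound
      have hp_le : gaussDens d μp Sp y ≤ K0 * t ^ (-(d:ℝ)/2) := by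
        rw [hgp]
        calc c2 * ap * Real.exp Ap ≤ 1 * (K0 * t ^ (-(d:ℝ)/2)) * 1 := by
              exact mul_le_mul (mul_le_mul hc2le hap_le hap0.le zero_le_one) hXle1
                (Real.exp_pos _).le (by positivity)
        _ = K0 * t ^ (-(d:ℝ)/2) := by ring
      have hq_le : gaussDens d μq Sq y ≤ K0 * t ^ (-(d:ℝ)/2) := by
        rw [hgq]
        calc c2 * bq * Real.exp Aq ≤ 1 * (K0 * t ^ (-(d:ℝ)/2)) * 1 := by
              exact mul_le_mul (mul_le_mul hc2le hbq_le hbq0.le zero_le_one) hYle1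
                (Real.exp_pos _).le (by positivity)
        _ = K0 * t ^ (-(d:ℝ)/2) := by ring
      have hp_0 : 0 ≤ gaussDens d μp Sp y := by
        rw [hgp]; exact (mul_pos (mul_pos hc2pos hap0) (Real.exp_pos _)).le
      have hq_0 : 0 ≤ gaussDens d μq Sq y := by
        rw [hgq]; exact (mul_pos (mul_pos hc2pos hbq0) (Real.exp_pos _)).le
      have habs : |gaussDens d μp Sp y - gaussDens d μq Sq y| ≤ 2 * (K0 * t ^ (-(d:ℝ)/2)) := by
        rw [abs_sub_le_iff]; constructor <;> linarith only [hp_le, hq_le, hp_0, hq_0]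
      have hPs : t ^ (-(d:ℝ)/2) = P * Real.sqrt t := by
        rw [hPdef, Real.sqrt_eq_rpow, ← Real.rpow_add ht]
        congr 1; ring
      calc |gaussDens d μp Sp y - gaussDens d μq Sq y| ≤ 2 * (K0 * t ^ (-(d:ℝ)/2)) := habs
      _ = 2*K0*(P * Real.sqrt t) := by rw [hPs]; ring
      _ ≤ 2*K0*(P * (Mn + τ*F)) := by
          apply mul_le_mul_of_nonneg_left (mul_le_mul_of_nonneg_left hcase hP0.le)
            (by positivity)
      _ ≤ (2*K0 + 6*Λ^3*K0 + (d.factorial:ℝ)*d*Λ^((5*(d:ℝ))/2)) * (P * (Mn + τ * F)) := by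
          have h1 : 0 ≤ P * (Mn + τ*F) :=
            mul_nonneg hP0.le (add_nonneg hMn0 (mul_nonneg hτ0.le hF0))
          have h2 : (0:ℝ) ≤ 6*Λ^3*K0 := mul_nonneg (by positivity) hK0.le
          have h3 : (0:ℝ) ≤ (d.factorial:ℝ)*d*Λ^((5*(d:ℝ))/2) := by positivity
          exact mul_le_mul_of_nonneg_right (by linarith only [h2, h3, hK0]) h1
      _ = (2*K0 + 6*Λ^3*K0 + (d.factorial:ℝ)*d*Λ^((5*(d:ℝ))/2)) * P * (Mn + τ * F) := by
          ring
    · -- branch B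
      have hMns : Mn ≤ Real.sqrt t := le_trans (le_add_of_nonneg_right (by positivity)) hcase
      set np := Real.sqrt (nsqST17 zp) with hnpdef
      set nq := Real.sqrt (nsqST17 zq) with hnqdef
      have hnp0 : 0 ≤ np := Real.sqrt_nonneg _
      have hnq0 : 0 ≤ nq := Real.sqrt_nonneg _
      set s := min np nq with hsdef
      have hs0 : 0 ≤ s := le_min hnp0 hnq0
      set E' := Real.exp (-(s^2/(2*Λ*t))) with hE'def
      have hE'0 : 0 ≤ E' := (Real.exp_pos _).le
      -- exponent bounds
      have hApB : Ap ≤ -(s^2/(2*Λ*t)) := by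
        have h1 := Pp.invlow zp
        have h2 : s^2 ≤ nsqST17 zp := by
          have h3 : s^2 ≤ np^2 := pow_le_pow_left₀ hs0 (min_le_left _ _) 2
          rwa [hnpdef, Real.sq_sqrt (nsqST17_nonneg zp)] at h3
        have key : s^2/(2*Λ*t) ≤ (1/2)*(Sp⁻¹ *ᵥ zp ⬝ᵥ zp) := by
          have h4 : s^2 * (2*Λ*t)⁻¹ ≤ nsqST17 zp * (2*Λ*t)⁻¹ :=
            mul_le_mul_of_nonneg_right h2 (by positivity)
          have h5 : nsqST17 zp * (2*Λ*t)⁻¹ ≤ (1/2)*(Sp⁻¹ *ᵥ zp ⬝ᵥ zp) := by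
            have e : nsqST17 zp * (2*Λ*t)⁻¹ = (1/2) * ((Λ*t)⁻¹ * nsqST17 zp) := by
              field_simp
            rw [e]; linarith only [h1]
          calc s^2/(2*Λ*t) = s^2 * (2*Λ*t)⁻¹ := div_eq_mul_inv _ _
          _ ≤ _ := h4.trans h5
        rw [hApdef]
        linarith only [key]
      have hAqB : Aq ≤ -(s^2/(2*Λ*t)) := by
        have h1 := Pq.invlow zq
        have h2 : s^2 ≤ nsqST17 zq := by
          have h3 : s^2 ≤ nq^2 := pow_le_pow_left₀ hs0 (min_le_right _ _) 2
          rwa [hnqdef, Real.sq_sqrt (nsqST17_nonneg zq)] at h3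
        have key : s^2/(2*Λ*t) ≤ (1/2)*(Sq⁻¹ *ᵥ zq ⬝ᵥ zq) := by
          have h4 : s^2 * (2*Λ*t)⁻¹ ≤ nsqST17 zq * (2*Λ*t)⁻¹ :=
            mul_le_mul_of_nonneg_right h2 (by positivity)
          have h5 : nsqST17 zq * (2*Λ*t)⁻¹ ≤ (1/2)*(Sq⁻¹ *ᵥ zq ⬝ᵥ zq) := by
            have e : nsqST17 zq * (2*Λ*t)⁻¹ = (1/2) * ((Λ*t)⁻¹ * nsqST17 zq) := by
              field_simp
            rw [e]; linarith only [h1]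
          calc s^2/(2*Λ*t) = s^2 * (2*Λ*t)⁻¹ := div_eq_mul_inv _ _
          _ ≤ _ := h4.trans h5
        rw [hAqdef]
        linarith only [key]
      have hEmax : Real.exp (max Ap Aq) ≤ E' := by
        rw [hE'def]; exact Real.exp_le_exp.mpr (max_le hApB hAqB)
      -- splitting identity
      have hid : Sp⁻¹ * (Sq - Sp) * Sq⁻¹ = Sp⁻¹ - Sq⁻¹ := by
        rw [Matrix.mul_sub, Matrix.sub_mul, Matrix.mul_assoc,
          Matrix.mul_nonsing_inv Sq Pq.detunit, Matrix.nonsing_inv_mul Sp Pp.detunit,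
          Matrix.mul_one, Matrix.one_mul]
      have hQ1eq : Sp⁻¹ *ᵥ zp ⬝ᵥ zp - Sq⁻¹ *ᵥ zp ⬝ᵥ zp =
          (Sq - Sp) *ᵥ (Sq⁻¹ *ᵥ zp) ⬝ᵥ (Sp⁻¹ *ᵥ zp) := by
        have e1 : Sp⁻¹ *ᵥ zp ⬝ᵥ zp - Sq⁻¹ *ᵥ zp ⬝ᵥ zp = (Sp⁻¹ - Sq⁻¹) *ᵥ zp ⬝ᵥ zp := by
          rw [Matrix.sub_mulVec, sub_dotProduct]
        rw [e1, ← hid, ← Matrix.mulVec_mulVec, ← Matrix.mulVec_mulVec,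
          symm_dotST17 Sp⁻¹ Pp.invsymm]
        exact dotProduct_comm _ _
      have hT23 : Sq⁻¹ *ᵥ zp ⬝ᵥ zp - Sq⁻¹ *ᵥ zq ⬝ᵥ zq =
          Sq⁻¹ *ᵥ zp ⬝ᵥ (zp - zq) + Sq⁻¹ *ᵥ (zp - zq) ⬝ᵥ zq := by
        simp only [Matrix.mulVec_sub, sub_dotProduct, dotProduct_sub]; ring
      have hsplit : Ap - Aq = -(1/2 : ℝ) * ((Sq - Sp) *ᵥ (Sq⁻¹ *ᵥ zp) ⬝ᵥ (Sp⁻¹ *ᵥ zp)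
          + (Sq⁻¹ *ᵥ zp ⬝ᵥ (zp - zq) + Sq⁻¹ *ᵥ (zp - zq) ⬝ᵥ zq)) := by
        rw [hApdef, hAqdef]
        linear_combination (-(1/2 : ℝ)) * hQ1eq + (-(1/2 : ℝ)) * hT23
      -- Mn facts
      have hMn_nsq : Real.sqrt (nsqST17 (zp - zq)) = Mn := by
        rw [hMndef]; congr 1
        simp only [nsqST17]
        have h : ∀ i, (zp - zq) i = μq i - μp i := by
          intro i; simp [hzp, hzq]
        exact Finset.sum_congr rfl fun i _ => by rw [h i]; ring
      -- three bounds
      have hb1 : |(Sq - Sp) *ᵥ (Sq⁻¹ *ᵥ zp) ⬝ᵥ (Sp⁻¹ *ᵥ zp)| ≤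
          F * (((Λ⁻¹*t)⁻¹*np) * ((Λ⁻¹*t)⁻¹*np)) := by
        have h := frob_boundST17 (Sq - Sp) (Sq⁻¹ *ᵥ zp) (Sp⁻¹ *ᵥ zp)
        have hFswap : Real.sqrt (∑ i, ∑ j, (Sq - Sp) i j ^2) = F := by
          rw [hFdef]; congr 1
          exact Finset.sum_congr rfl fun i _ => Finset.sum_congr rfl fun j _ => by
            simp [Matrix.sub_apply]; ring
        rw [hFswap] at h
        refine h.trans ?_
        apply mul_le_mul_of_nonneg_left ?_ hF0
        exact mul_le_mul (Pq.invop zp) (Pp.invop zp) (Real.sqrt_nonneg _) (by positivity)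
      have hb2 : |Sq⁻¹ *ᵥ zp ⬝ᵥ (zp - zq)| ≤ ((Λ⁻¹*t)⁻¹*np) * Mn := by
        have h := abs_dot_leST17 (Sq⁻¹ *ᵥ zp) (zp - zq)
        rw [hMn_nsq] at h
        exact h.trans (mul_le_mul_of_nonneg_right (Pq.invop zp) hMn0)
      have hb3 : |Sq⁻¹ *ᵥ (zp - zq) ⬝ᵥ zq| ≤ ((Λ⁻¹*t)⁻¹*Mn) * nq := by
        have h := abs_dot_leST17 (Sq⁻¹ *ᵥ (zp - zq)) zq
        refine h.trans ?_
        apply mul_le_mul_of_nonneg_right ?_ (Real.sqrt_nonneg _)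
        have h2 := Pq.invop (zp - zq)
        rwa [hMn_nsq] at h2
      have habsdiff : |Ap - Aq| ≤ 1/2 * (F * (((Λ⁻¹*t)⁻¹)^2 * np^2)
          + (Λ⁻¹*t)⁻¹*np*Mn + (Λ⁻¹*t)⁻¹*Mn*nq) := by
        rw [hsplit, abs_mul, show |(-(1/2):ℝ)| = 1/2 by norm_num]
        have h2 : |(Sq - Sp) *ᵥ (Sq⁻¹ *ᵥ zp) ⬝ᵥ (Sp⁻¹ *ᵥ zp)
            + (Sq⁻¹ *ᵥ zp ⬝ᵥ (zp - zq) + Sq⁻¹ *ᵥ (zp - zq) ⬝ᵥ zq)| ≤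
            |(Sq - Sp) *ᵥ (Sq⁻¹ *ᵥ zp) ⬝ᵥ (Sp⁻¹ *ᵥ zp)|
            + (|Sq⁻¹ *ᵥ zp ⬝ᵥ (zp - zq)| + |Sq⁻¹ *ᵥ (zp - zq) ⬝ᵥ zq|) :=
          (abs_add_le _ _).trans (by linarith only [abs_add_le (Sq⁻¹ *ᵥ zp ⬝ᵥ (zp - zq)) (Sq⁻¹ *ᵥ (zp - zq) ⬝ᵥ zq)])
        have h3 := h2.trans (by linarith only [hb1, hb2, hb3] :
          |(Sq - Sp) *ᵥ (Sq⁻¹ *ᵥ zp) ⬝ᵥ (Sp⁻¹ *ᵥ zp)|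
            + (|Sq⁻¹ *ᵥ zp ⬝ᵥ (zp - zq)| + |Sq⁻¹ *ᵥ (zp - zq) ⬝ᵥ zq|) ≤
            F * (((Λ⁻¹*t)⁻¹*np) * ((Λ⁻¹*t)⁻¹*np)) + (((Λ⁻¹*t)⁻¹*np) * Mn
            + ((Λ⁻¹*t)⁻¹*Mn) * nq))
        calc (1/2 : ℝ) * |(Sq - Sp) *ᵥ (Sq⁻¹ *ᵥ zp) ⬝ᵥ (Sp⁻¹ *ᵥ zp)
            + (Sq⁻¹ *ᵥ zp ⬝ᵥ (zp - zq) + Sq⁻¹ *ᵥ (zp - zq) ⬝ᵥ zq)| ≤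
            1/2 * (F * (((Λ⁻¹*t)⁻¹*np) * ((Λ⁻¹*t)⁻¹*np)) + (((Λ⁻¹*t)⁻¹*np) * Mn
            + ((Λ⁻¹*t)⁻¹*Mn) * nq)) := by linarith only [h3]
        _ = 1/2 * (F * (((Λ⁻¹*t)⁻¹)^2 * np^2) + (Λ⁻¹*t)⁻¹*np*Mn + (Λ⁻¹*t)⁻¹*Mn*nq) := by
            ring
      -- np, nq ≤ s + √t
      have htri_p : np ≤ nq + Mn := by
        have h : zp = zq + (zp - zq) := by funext i; simp
        have h2 := sqrt_nsq_addST17 zq (zp - zq)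
        rw [← h, hMn_nsq] at h2
        exact h2
      have htri_q : nq ≤ np + Mn := by
        have h : zq = zp + (zq - zp) := by funext i; simp
        have h2 := sqrt_nsq_addST17 zp (zq - zp)
        have hMn' : Real.sqrt (nsqST17 (zq - zp)) = Mn := by
          rw [hMndef]; congr 1
          simp only [nsqST17]
          have h : ∀ i, (zq - zp) i = μp i - μq i := by
            intro i; simp [hzp, hzq]
          exact Finset.sum_congr rfl fun i _ => by rw [h i]
        rw [← h, hMn'] at h2
        exact h2
      have hnps : np ≤ s + Real.sqrt t := by
        rcases le_total np nq with h | h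
        · rw [hsdef, min_eq_left h]; linarith only [hst0.le]
        · rw [hsdef, min_eq_right h]; linarith only [htri_p, hMns]
      have hnqs : nq ≤ s + Real.sqrt t := by
        rcases le_total np nq with h | h
        · rw [hsdef, min_eq_left h]; linarith only [htri_q, hMns]
        · rw [hsdef, min_eq_right h]; linarith only [hst0.le]
      -- exp decay products
      have hE2 : E' * (s + Real.sqrt t)^2 ≤ 6*Λ*t := exp_decay_sqST17 Λ t s hΛ ht
      have hsv : Real.sqrt t ≤ s + Real.sqrt t := le_add_of_nonneg_left hs0
      have hE1 : E' * (s + Real.sqrt t) ≤ 6*Λ*Real.sqrt t := by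
        have h1 : (E' * (s + Real.sqrt t)) * Real.sqrt t
            ≤ (E' * (s + Real.sqrt t)) * (s + Real.sqrt t) :=
          mul_le_mul_of_nonneg_left hsv (by positivity)
        have h2 : (E' * (s + Real.sqrt t)) * (s + Real.sqrt t) = E' * (s + Real.sqrt t)^2 := by
          ring
        have h3 : (6*Λ*Real.sqrt t) * Real.sqrt t = 6*Λ*t := by
          rw [mul_assoc, Real.mul_self_sqrt ht.le]
        rw [h2] at h1
        have h4 : (E' * (s + Real.sqrt t)) * Real.sqrt t ≤ (6*Λ*Real.sqrt t) * Real.sqrt t := by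
          rw [h3]; exact h1.trans hE2
        exact le_of_mul_le_mul_right h4 hst0
      have hEnp2 : E' * np^2 ≤ 6*Λ*t := by
        have h : np^2 ≤ (s + Real.sqrt t)^2 := pow_le_pow_left₀ hnp0 hnps 2
        exact (mul_le_mul_of_nonneg_left h hE'0).trans hE2
      have hEnp : E' * np ≤ 6*Λ*Real.sqrt t := (mul_le_mul_of_nonneg_left hnps hE'0).trans hE1
      have hEnq : E' * nq ≤ 6*Λ*Real.sqrt t := (mul_le_mul_of_nonneg_left hnqs hE'0).trans hE1
      -- core bound on E' * |Ap - Aq|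
      have hcore : E' * |Ap - Aq| ≤ 3*Λ*F*((Λ⁻¹*t)⁻¹)^2*t + 6*Λ*(Λ⁻¹*t)⁻¹*Mn*Real.sqrt t := by
        have h1 : E' * |Ap - Aq| ≤ 1/2 * (F*((Λ⁻¹*t)⁻¹)^2*(E'*np^2)
            + (Λ⁻¹*t)⁻¹*Mn*(E'*np) + (Λ⁻¹*t)⁻¹*Mn*(E'*nq)) := by
          calc E' * |Ap - Aq| ≤ E' * (1/2 * (F * (((Λ⁻¹*t)⁻¹)^2 * np^2)
              + (Λ⁻¹*t)⁻¹*np*Mn + (Λ⁻¹*t)⁻¹*Mn*nq)) :=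
            mul_le_mul_of_nonneg_left habsdiff hE'0
          _ = _ := by ring
        have b1 : F*((Λ⁻¹*t)⁻¹)^2*(E'*np^2) ≤ F*((Λ⁻¹*t)⁻¹)^2*(6*Λ*t) :=
          mul_le_mul_of_nonneg_left hEnp2 (by positivity)
        have b2 : (Λ⁻¹*t)⁻¹*Mn*(E'*np) ≤ (Λ⁻¹*t)⁻¹*Mn*(6*Λ*Real.sqrt t) :=
          mul_le_mul_of_nonneg_left hEnp (by positivity)
        have b3 : (Λ⁻¹*t)⁻¹*Mn*(E'*nq) ≤ (Λ⁻¹*t)⁻¹*Mn*(6*Λ*Real.sqrt t) :=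
          mul_le_mul_of_nonneg_left hEnq (by positivity)
        calc E' * |Ap - Aq| ≤ 1/2 * (F*((Λ⁻¹*t)⁻¹)^2*(E'*np^2)
            + (Λ⁻¹*t)⁻¹*Mn*(E'*np) + (Λ⁻¹*t)⁻¹*Mn*(E'*nq)) := h1
        _ ≤ 1/2 * (F*((Λ⁻¹*t)⁻¹)^2*(6*Λ*t) + (Λ⁻¹*t)⁻¹*Mn*(6*Λ*Real.sqrt t)
            + (Λ⁻¹*t)⁻¹*Mn*(6*Λ*Real.sqrt t)) := by linarith only [b1, b2, b3]
        _ = 3*Λ*F*((Λ⁻¹*t)⁻¹)^2*t + 6*Λ*(Λ⁻¹*t)⁻¹*Mn*Real.sqrt t := by ring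
      have hXYle : |Real.exp Ap - Real.exp Aq| ≤ E' * |Ap - Aq| :=
        (exp_sub_exp_leST17 Ap Aq).trans (mul_le_mul_of_nonneg_right hEmax (abs_nonneg _))
      have hterm1 : ap * |Real.exp Ap - Real.exp Aq| ≤ (K0 * t ^ (-(d:ℝ)/2))
          * (3*Λ*F*((Λ⁻¹*t)⁻¹)^2*t + 6*Λ*(Λ⁻¹*t)⁻¹*Mn*Real.sqrt t) :=
        mul_le_mul hap_le (hXYle.trans hcore) (abs_nonneg _) (by positivity)
      -- conversion of term1
      have hι_eq : ((Λ⁻¹*t)⁻¹ : ℝ) = Λ * t⁻¹ := by rw [mul_inv, inv_inv]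
      have htt : t * t⁻¹ = 1 := mul_inv_cancel₀ ht.ne'
      have e1 : t⁻¹ * t ^ (-(d:ℝ)/2) = P * τ := by
        rw [hPdef, hτdef, ← Real.rpow_neg_one t, ← Real.rpow_add ht, ← Real.rpow_add ht]
        congr 1; ring
      have e2 : Real.sqrt t * t⁻¹ * t ^ (-(d:ℝ)/2) = P := by
        rw [hPdef, Real.sqrt_eq_rpow, ← Real.rpow_neg_one t, ← Real.rpow_add ht,
          ← Real.rpow_add ht]
        congr 1; ring
      have hconv : (K0 * t ^ (-(d:ℝ)/2))
          * (3*Λ*F*((Λ⁻¹*t)⁻¹)^2*t + 6*Λ*(Λ⁻¹*t)⁻¹*Mn*Real.sqrt t)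
          = 3*Λ^3*K0*F*(P*τ) + 6*Λ^2*K0*Mn*P := by
        calc (K0 * t ^ (-(d:ℝ)/2))
            * (3*Λ*F*((Λ⁻¹*t)⁻¹)^2*t + 6*Λ*(Λ⁻¹*t)⁻¹*Mn*Real.sqrt t)
            = 3*Λ^3*K0*F*((t*t⁻¹)*(t⁻¹ * t ^ (-(d:ℝ)/2)))
              + 6*Λ^2*K0*Mn*(Real.sqrt t * t⁻¹ * t ^ (-(d:ℝ)/2)) := by
              rw [hι_eq]; ring
        _ = 3*Λ^3*K0*F*(P*τ) + 6*Λ^2*K0*Mn*P := by rw [htt, e1, e2, one_mul]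
      -- term2 : determinant part
      have hentryF : ∀ i j, |Sp i j - Sq i j| ≤ F := by
        intro i j
        rw [hFdef]
        have h1 : (Sp i j - Sq i j)^2 ≤ ∑ j', (Sp i j' - Sq i j')^2 :=
          Finset.single_le_sum (f := fun j' => (Sp i j' - Sq i j')^2)
            (fun _ _ => sq_nonneg _) (Finset.mem_univ j)
        have h2 : (∑ j', (Sp i j' - Sq i j')^2) ≤ ∑ i', ∑ j', (Sp i' j' - Sq i' j')^2 :=
          Finset.single_le_sum (f := fun i' => ∑ j', (Sp i' j' - Sq i' j')^2)
            (fun _ _ => Finset.sum_nonneg fun _ _ => sq_nonneg _) (Finset.mem_univ i)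
        calc |Sp i j - Sq i j| = Real.sqrt ((Sp i j - Sq i j)^2) := (Real.sqrt_sq_eq_abs _).symm
        _ ≤ _ := Real.sqrt_le_sqrt (h1.trans h2)
      have hdetlip := det_lipST17 Sp Sq (Λ*t) F hβ.le hF0 Pp.entry Pq.entry hentryF
      set sp := Real.sqrt Sp.det with hspdef
      set sq' := Real.sqrt Sq.det with hsqdef
      set sm := Real.sqrt ((Λ⁻¹*t)^d) with hsmdef
      have hsp0 : 0 < sp := Real.sqrt_pos.mpr hdp0
      have hsq0 : 0 < sq' := Real.sqrt_pos.mpr hdq0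
      have hsm0 : 0 < sm := Real.sqrt_pos.mpr (pow_pos hα d)
      have hsp_ge : sm ≤ sp := Real.sqrt_le_sqrt Pp.detlow
      have hsq_ge : sm ≤ sq' := Real.sqrt_le_sqrt Pq.detlow
      have hap_eq : ap = sp⁻¹ := by rw [hapdef, rpow_neg_half_eqST17 _ hdp0, hspdef]
      have hbq_eq : bq = sq'⁻¹ := by rw [hbqdef, rpow_neg_half_eqST17 _ hdq0, hsqdef]
      have hdiff : ap - bq = (sq' - sp) / (sp * sq') := by
        rw [hap_eq, hbq_eq]; field_simp
      have hsq2 : sq'^2 = Sq.det := Real.sq_sqrt hdq0.le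
      have hsp2 : sp^2 = Sp.det := Real.sq_sqrt hdp0.le
      have hnum : |sq' - sp| * (sq' + sp) = |Sq.det - Sp.det| := by
        have h : (sq' - sp) * (sq' + sp) = Sq.det - Sp.det := by
          linear_combination hsq2 - hsp2
        calc |sq' - sp| * (sq' + sp) = |sq' - sp| * |sq' + sp| := by
              rw [abs_of_pos (add_pos hsq0 hsp0)]
        _ = |(sq' - sp) * (sq' + sp)| := (abs_mul _ _).symm
        _ = _ := by rw [h]
      have hstepa : |sq' - sp| ≤ |Sq.det - Sp.det| / (2 * sm) := by
        rw [le_div_iff₀ (by positivity)]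
        calc |sq' - sp| * (2*sm) ≤ |sq' - sp| * (sq' + sp) := by
              apply mul_le_mul_of_nonneg_left ?_ (abs_nonneg _)
              linarith only [hsp_ge, hsq_ge]
        _ = |Sq.det - Sp.det| := hnum
      have habq : |ap - bq| ≤ ((d.factorial:ℝ)*d*(Λ*t)^(d-1)*F) / (2 * sm * (Λ⁻¹*t)^d) := by
        calc |ap - bq| = |sq' - sp| / (sp * sq') := by
              rw [hdiff, abs_div, abs_of_pos (mul_pos hsp0 hsq0)]
        _ ≤ (|Sq.det - Sp.det| / (2 * sm)) / (sp * sq') := by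
            gcongr
        _ ≤ (|Sq.det - Sp.det| / (2 * sm)) / (sm * sm) := by
            apply div_le_div_of_nonneg_left (by positivity) (by positivity)
            exact mul_le_mul hsp_ge hsq_ge hsm0.le hsp0.le
        _ = |Sq.det - Sp.det| / (2 * sm * (Λ⁻¹*t)^d) := by
            rw [div_div, Real.mul_self_sqrt (pow_pos hα d).le]
        _ ≤ ((d.factorial:ℝ)*d*(Λ*t)^(d-1)*F) / (2 * sm * (Λ⁻¹*t)^d) := by
            gcongr
            rw [abs_sub_comm]
            exact hdetlip
      have hterm2 : |ap - bq| ≤ (d.factorial:ℝ)*d*Λ^((5*(d:ℝ))/2) * (P * (τ * F)) := by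
        refine habq.trans ?_
        have hpb := power_boundST17 Λ t hΛ ht d hd1
        calc ((d.factorial:ℝ)*d*(Λ*t)^(d-1)*F) / (2 * sm * (Λ⁻¹*t)^d)
            = ((d.factorial:ℝ)*d*F) * ((Λ*t)^(d-1) / (2 * sm * (Λ⁻¹*t)^d)) := by ring
        _ ≤ ((d.factorial:ℝ)*d*F) * (Λ^((5*(d:ℝ))/2) * (P * τ)) := by
            apply mul_le_mul_of_nonneg_left ?_ (by positivity)
            rw [hsmdef, hPdef, hτdef]
            exact hpb
        _ = (d.factorial:ℝ)*d*Λ^((5*(d:ℝ))/2) * (P * (τ * F)) := by ring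
      -- final assembly
      have hsplit_pq : gaussDens d μp Sp y - gaussDens d μq Sq y
          = c2 * (ap * (Real.exp Ap - Real.exp Aq)) + c2 * ((ap - bq) * Real.exp Aq) := by
        rw [hgp, hgq]; ring
      calc |gaussDens d μp Sp y - gaussDens d μq Sq y|
          ≤ c2 * (ap * |Real.exp Ap - Real.exp Aq|) + c2 * (|ap - bq| * Real.exp Aq) := by
            rw [hsplit_pq]
            refine (abs_add_le _ _).trans ?_
            have f1 : |c2 * (ap * (Real.exp Ap - Real.exp Aq))|
                = c2 * (ap * |Real.exp Ap - Real.exp Aq|) := by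
              rw [abs_mul, abs_mul, abs_of_pos hc2pos, abs_of_pos hap0]
            have f2 : |c2 * ((ap - bq) * Real.exp Aq)| = c2 * (|ap - bq| * Real.exp Aq) := by
              rw [abs_mul, abs_mul, abs_of_pos hc2pos, abs_of_pos (Real.exp_pos _)]
            rw [f1, f2]
      _ ≤ ap * |Real.exp Ap - Real.exp Aq| + |ap - bq| := by
            have t1 : c2 * (ap * |Real.exp Ap - Real.exp Aq|)
                ≤ 1 * (ap * |Real.exp Ap - Real.exp Aq|) :=
              mul_le_mul_of_nonneg_right hc2le (mul_nonneg hap0.le (abs_nonneg _))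
            have t2 : c2 * (|ap - bq| * Real.exp Aq) ≤ 1 * (|ap - bq| * 1) := by
              apply mul_le_mul hc2le ?_ (mul_nonneg (abs_nonneg _) (Real.exp_pos _).le)
                zero_le_one
              exact mul_le_mul_of_nonneg_left hYle1 (abs_nonneg _)
            linarith only [t1, t2]
      _ ≤ (K0 * t ^ (-(d:ℝ)/2))
            * (3*Λ*F*((Λ⁻¹*t)⁻¹)^2*t + 6*Λ*(Λ⁻¹*t)⁻¹*Mn*Real.sqrt t)
          + (d.factorial:ℝ)*d*Λ^((5*(d:ℝ))/2) * (P * (τ * F)) := add_le_add hterm1 hterm2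
      _ = 3*Λ^3*K0*F*(P*τ) + 6*Λ^2*K0*Mn*P
          + (d.factorial:ℝ)*d*Λ^((5*(d:ℝ))/2) * (P * (τ * F)) := by rw [hconv]
      _ ≤ (2*K0 + 6*Λ^3*K0 + (d.factorial:ℝ)*d*Λ^((5*(d:ℝ))/2)) * P * (Mn + τ * F) := by
          have hPTF : 0 ≤ P*(τ*F) := mul_nonneg hP0.le (mul_nonneg hτ0.le hF0)
          have hPM : 0 ≤ P*Mn := mul_nonneg hP0.le hMn0
          have ha : 0 ≤ 2*K0*(P*Mn) := mul_nonneg (by positivity) hPM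
          have hb : 0 ≤ 2*K0*(P*(τ*F)) := mul_nonneg (by positivity) hPTF
          have hΛ3 : Λ^2 ≤ Λ^3 := pow_le_pow_right₀ hΛ (by norm_num)
          have hc : 0 ≤ 6*K0*(Λ^3-Λ^2)*(P*Mn) :=
            mul_nonneg (mul_nonneg (by positivity) (by linarith only [hΛ3])) hPM
          have hdd : 0 ≤ 3*Λ^3*K0*(P*(τ*F)) := mul_nonneg (by positivity) hPTF
          have he : 0 ≤ ((d.factorial:ℝ)*d*Λ^((5*(d:ℝ))/2))*(P*Mn) :=
            mul_nonneg (by positivity) hPM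
          linarith only [ha, hb, hc, hdd, he]
end
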